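/- Let G(s) = diag(1/s, 1/s², …, 1/sⁿ). Then the pair D(s) = diag(s, s², …, sⁿ), N(s) = I_n satisfies D(s)⁻¹N(s) = G(s), and for every pair of n×n complex matrices F₁, F₂ with F₁·F₂ᵀ = F₂·F₁ᵀ and [F₁ F₂] of rank n, the polynomial det [[D(s), N(s)],[F₁, F₂]] is not identically zero. -/

import Mathlib

open Matrix Polynomial

/-- For a Lagrangian pair `(F₁,F₂)` of full rank, any solution `(u,w)` of `F₁ w = F₂ u`
lies in the row space of `[F₁ F₂]`. -/
lemma lagrangian_rep {n : ℕ} (F₁ F₂ : Matrix (Fin n) (Fin n) ℂ)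
    (hsym : F₁ * F₂.transpose = F₂ * F₁.transpose)
    (hrank : (Matrix.fromCols F₁ F₂).rank = n)
    (u w : Fin n → ℂ) (h : F₁.mulVec w = F₂.mulVec u) :
    ∃ c : Fin n → ℂ, u = Matrix.vecMul c F₁ ∧ w = Matrix.vecMul c F₂ := by
  classical
  set G := Matrix.fromCols F₁ F₂ with hG
  set A := Matrix.fromCols F₂ (-F₁) with hA
  set P : Matrix (Fin n ⊕ Fin n) (Fin n ⊕ Fin n) ℂ := Matrix.fromBlocks 0 (-1) 1 0 with hP
  have hGP : G * P = A := by
    rw [hG, hP, Matrix.fromCols_mul_fromBlocks]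
    simp [hA]
  have hPmul : P * Matrix.fromBlocks 0 1 (-1) 0 = 1 := by
    rw [hP, Matrix.fromBlocks_multiply]
    simp [Matrix.fromBlocks_one]
  have hPunit : IsUnit P.det :=
    IsUnit.of_mul_eq_one _ (by rw [← Matrix.det_mul, hPmul, Matrix.det_one])
  have hArank : A.rank = n := by
    rw [← hGP, Matrix.rank_mul_eq_left_of_isUnit_det _ _ hPunit, hrank]
  have hRle : LinearMap.range G.vecMulLinear ≤ LinearMap.ker A.mulVecLin := by
    rintro x ⟨c, rfl⟩
    simp only [LinearMap.mem_ker, Matrix.mulVecLin_apply, Matrix.vecMulLinear_apply]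
    rw [hG, Matrix.vecMul_fromCols, hA, Matrix.fromCols_mulVec_sumElim]
    rw [← Matrix.mulVec_transpose, ← Matrix.mulVec_transpose, Matrix.mulVec_mulVec,
      Matrix.mulVec_mulVec, Matrix.neg_mul, Matrix.neg_mulVec, hsym]
    simp
  have hfinR : Module.finrank ℂ (LinearMap.range G.vecMulLinear) = n := by
    rw [← Matrix.mulVecLin_transpose]
    have : Gᵀ.rank = n := by rw [Matrix.rank_transpose, hrank]
    exact this
  have hfinK : Module.finrank ℂ (LinearMap.ker A.mulVecLin) = n := by
    have h1 := LinearMap.finrank_range_add_finrank_ker A.mulVecLin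
    have h2 : Module.finrank ℂ (LinearMap.range A.mulVecLin) = n := hArank
    have h3 : Module.finrank ℂ ((Fin n ⊕ Fin n) → ℂ) = n + n := by
      simp [Module.finrank_pi]
    omega
  have heq : LinearMap.range G.vecMulLinear = LinearMap.ker A.mulVecLin :=
    Submodule.eq_of_le_of_finrank_eq hRle (by rw [hfinR, hfinK])
  have hz : Sum.elim u w ∈ LinearMap.ker A.mulVecLin := by
    simp only [LinearMap.mem_ker, Matrix.mulVecLin_apply]
    rw [hA, Matrix.fromCols_mulVec_sumElim, Matrix.neg_mulVec, ← h]
    simp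
  rw [← heq] at hz
  obtain ⟨c, hc⟩ := hz
  refine ⟨c, ?_, ?_⟩
  · funext i
    have := congrFun hc (Sum.inl i)
    simpa [hG, Matrix.vecMul_fromCols] using this.symm
  · funext i
    have := congrFun hc (Sum.inr i)
    simpa [hG, Matrix.vecMul_fromCols] using this.symm

/-- The symplectic form vanishes on pairs of solutions. -/
lemma lagrangian_pairing {n : ℕ} (F₁ F₂ : Matrix (Fin n) (Fin n) ℂ)
    (hsym : F₁ * F₂.transpose = F₂ * F₁.transpose)
    (hrank : (Matrix.fromCols F₁ F₂).rank = n)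
    (u w u' w' : Fin n → ℂ) (h : F₁.mulVec w = F₂.mulVec u)
    (h' : F₁.mulVec w' = F₂.mulVec u') :
    u ⬝ᵥ w' = w ⬝ᵥ u' := by
  obtain ⟨c, hu, hw⟩ := lagrangian_rep F₁ F₂ hsym hrank u w h
  obtain ⟨c', hu', hw'⟩ := lagrangian_rep F₁ F₂ hsym hrank u' w' h'
  rw [hu, hw, hu', hw', ← Matrix.mulVec_transpose F₂ c', ← Matrix.mulVec_transpose F₁ c',
    dotProduct_mulVec, dotProduct_mulVec, Matrix.vecMul_vecMul,
    Matrix.vecMul_vecMul, hsym]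

/-- The two-variable coefficient identity forces the polynomial vector to vanish. -/
lemma poly_pairing_contradiction {n : ℕ} (a : Fin n → Polynomial ℂ) (ha : a ≠ 0)
    (hpair : ∀ k l : ℕ,
      (fun i : Fin n => ((X : Polynomial ℂ) ^ ((i : ℕ) + 1) * a i).coeff k) ⬝ᵥ
        (fun i : Fin n => (a i).coeff l) =
      (fun i : Fin n => (a i).coeff k) ⬝ᵥ
        (fun i : Fin n => ((X : Polynomial ℂ) ^ ((i : ℕ) + 1) * a i).coeff l)) : False := by
  classical
  set T : Finset (Fin n) := Finset.univ.filter (fun i => a i ≠ 0) with hT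
  have hTne : T.Nonempty := by
    obtain ⟨i, hi⟩ := Function.ne_iff.mp ha
    exact ⟨i, Finset.mem_filter.mpr ⟨Finset.mem_univ _, by simpa using hi⟩⟩
  set D : ℕ := T.sup (fun i => (a i).natDegree + (i : ℕ) + 1) with hD
  obtain ⟨i₀, hi₀T, hi₀D⟩ : ∃ i ∈ T, D = (a i).natDegree + (i : ℕ) + 1 :=
    Finset.exists_mem_eq_sup T hTne _
  -- choose the minimal index attaining the sup
  set S : Finset (Fin n) := T.filter (fun i => (a i).natDegree + (i : ℕ) + 1 = D) with hS
  have hSne : S.Nonempty := ⟨i₀, by simp [hS, hi₀T, hi₀D.symm]⟩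
  set j : Fin n := S.min' hSne with hj
  have hjS : j ∈ S := S.min'_mem hSne
  have hjT : j ∈ T := (Finset.mem_filter.mp hjS).1
  have hja : a j ≠ 0 := by simpa [hT] using (Finset.mem_filter.mp hjT).2
  have hjD : (a j).natDegree + (j : ℕ) + 1 = D := (Finset.mem_filter.mp hjS).2
  set l₀ : ℕ := (a j).natDegree with hl₀
  have key := hpair D l₀
  -- right-hand side vanishes
  have hrhs : (fun i : Fin n => (a i).coeff D) ⬝ᵥ
      (fun i : Fin n => ((X : Polynomial ℂ) ^ ((i : ℕ) + 1) * a i).coeff l₀) = 0 := by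
    unfold dotProduct
    refine Finset.sum_eq_zero fun i _ => ?_
    rcases eq_or_ne (a i) 0 with h0 | h0
    · simp [h0]
    · have hle : (a i).natDegree + (i : ℕ) + 1 ≤ D :=
        Finset.le_sup (f := fun i => (a i).natDegree + (i : ℕ) + 1)
          (by simp [hT, h0] : i ∈ T)
      have : (a i).coeff D = 0 :=
        Polynomial.coeff_eq_zero_of_natDegree_lt (by omega)
      simp [this]
  rw [hrhs] at key
  -- left-hand side is the square of the leading coefficient of `a j`
  have hlhs : (fun i : Fin n => ((X : Polynomial ℂ) ^ ((i : ℕ) + 1) * a i).coeff D) ⬝ᵥ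
      (fun i : Fin n => (a i).coeff l₀) = (a j).leadingCoeff * (a j).leadingCoeff := by
    unfold dotProduct
    rw [Finset.sum_eq_single_of_mem j (Finset.mem_univ j)]
    · show ((X : Polynomial ℂ) ^ ((j : ℕ) + 1) * a j).coeff D * (a j).coeff l₀ =
        (a j).leadingCoeff * (a j).leadingCoeff
      have hD' : ((j : ℕ) + 1 : ℕ) ≤ D := by omega
      rw [Polynomial.coeff_X_pow_mul', if_pos hD']
      have : D - ((j : ℕ) + 1) = (a j).natDegree := by omega
      rw [this, hl₀]
      rfl
    · intro i _ hij
      show ((X : Polynomial ℂ) ^ ((i : ℕ) + 1) * a i).coeff D * (a i).coeff l₀ = 0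
      rcases eq_or_ne (a i) 0 with h0 | h0
      · simp [h0]
      · have hiT : i ∈ T := by simp [hT, h0]
        have hle : (a i).natDegree + (i : ℕ) + 1 ≤ D :=
          Finset.le_sup (f := fun i => (a i).natDegree + (i : ℕ) + 1) hiT
        rcases eq_or_ne ((a i).natDegree + (i : ℕ) + 1) D with hiD | hiD
        · -- i attains the sup, so j ≤ i, hence j < i and the second factor vanishes
          have hiS : i ∈ S := by simp [hS, hiT, hiD]
          have hji : j ≤ i := S.min'_le i hiS
          have hji' : (j : ℕ) < (i : ℕ) := by
            rcases lt_or_eq_of_le hji with h | h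
            · exact h
            · exact absurd h.symm hij
          have : (a i).natDegree < l₀ := by omega
          rw [Polynomial.coeff_eq_zero_of_natDegree_lt this, mul_zero]
        · -- i does not attain the sup, so the first factor vanishes
          have hlt : (a i).natDegree + (i : ℕ) + 1 < D := lt_of_le_of_ne hle hiD
          have hD' : ((i : ℕ) + 1 : ℕ) ≤ D := by omega
          rw [Polynomial.coeff_X_pow_mul', if_pos hD']
          have : (a i).natDegree < D - ((i : ℕ) + 1) := by omega
          rw [Polynomial.coeff_eq_zero_of_natDegree_lt this, zero_mul]
  rw [hlhs] at key
  exact (Polynomial.leadingCoeff_ne_zero.mpr hja) (by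
    have := mul_self_eq_zero.mp key
    exact this)

open Polynomial in
theorem diagonal_system_nondegenerate (n : ℕ) (hn : 1 ≤ n) :
    (Matrix.diagonal (fun i : Fin n => (RatFunc.X : RatFunc ℂ) ^ ((i : ℕ) + 1)))⁻¹ * 1 =
        Matrix.diagonal (fun i : Fin n => ((RatFunc.X : RatFunc ℂ) ^ ((i : ℕ) + 1))⁻¹) ∧
    ∀ F₁ F₂ : Matrix (Fin n) (Fin n) ℂ,
      F₁ * F₂.transpose = F₂ * F₁.transpose →
      (Matrix.fromCols F₁ F₂).rank = n →
      Matrix.det (Matrix.fromBlocks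
          (Matrix.diagonal (fun i : Fin n => (X : Polynomial ℂ) ^ ((i : ℕ) + 1)))
          (1 : Matrix (Fin n) (Fin n) (Polynomial ℂ))
          (F₁.map C) (F₂.map C)) ≠ 0 := by
  constructor
  · rw [mul_one]
    apply Matrix.inv_eq_right_inv
    have h1 : (fun i : Fin n => (RatFunc.X : RatFunc ℂ) ^ ((i : ℕ) + 1) *
        ((RatFunc.X : RatFunc ℂ) ^ ((i : ℕ) + 1))⁻¹) = fun _ => 1 := by
      funext i
      exact mul_inv_cancel₀ (pow_ne_zero _ RatFunc.X_ne_zero)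
    rw [Matrix.diagonal_mul_diagonal, h1, Matrix.diagonal_one]
  · intro F₁ F₂ hsym hrank hdet
    classical
    set Δp : Matrix (Fin n) (Fin n) (Polynomial ℂ) :=
      Matrix.diagonal (fun i : Fin n => (X : Polynomial ℂ) ^ ((i : ℕ) + 1)) with hΔp
    -- reduce to the Schur-type determinant
    have hq : (F₁.map C - F₂.map C * Δp).det = 0 := by
      have hMJ : (Matrix.fromBlocks Δp 1 (F₁.map C) (F₂.map C)) *
          (Matrix.fromBlocks 0 1 1 0) =
          Matrix.fromBlocks 1 Δp (F₂.map C) (F₁.map C) := by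
        rw [Matrix.fromBlocks_multiply]
        simp
      calc (F₁.map C - F₂.map C * Δp).det
          = (Matrix.fromBlocks 1 Δp (F₂.map C) (F₁.map C)).det := by
            rw [Matrix.det_fromBlocks_one₁₁]
        _ = ((Matrix.fromBlocks Δp 1 (F₁.map C) (F₂.map C)) *
              (Matrix.fromBlocks 0 1 1 0)).det := by rw [hMJ]
        _ = 0 := by rw [Matrix.det_mul, hdet, zero_mul]
    obtain ⟨a, ha, hva⟩ := Matrix.exists_mulVec_eq_zero_iff.mpr hq
    have hva' : (F₁.map C).mulVec a = (F₂.map C * Δp).mulVec a := by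
      have := hva
      rw [Matrix.sub_mulVec] at this
      exact sub_eq_zero.mp this
    -- extract coefficientwise relations over ℂ
    set w : ℕ → Fin n → ℂ := fun k i => (a i).coeff k with hw
    set u : ℕ → Fin n → ℂ :=
      fun k i => ((X : Polynomial ℂ) ^ ((i : ℕ) + 1) * a i).coeff k with hu
    have hkey : ∀ k, F₁.mulVec (w k) = F₂.mulVec (u k) := by
      intro k
      funext j
      have := congrFun hva' j
      have hL : ((F₁.map C).mulVec a j).coeff k = F₁.mulVec (w k) j := by
        simp only [Matrix.mulVec, dotProduct, Polynomial.finset_sum_coeff,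
          Matrix.map_apply, Polynomial.coeff_C_mul, hw]
      have hR : ((F₂.map C * Δp).mulVec a j).coeff k = F₂.mulVec (u k) j := by
        simp only [Matrix.mulVec, dotProduct, Polynomial.finset_sum_coeff, hu]
        congr 1
        funext i
        rw [hΔp, Matrix.mul_diagonal, Matrix.map_apply, mul_assoc,
          Polynomial.coeff_C_mul]
      rw [← hL, ← hR, this]
    have hpair : ∀ k l, u k ⬝ᵥ w l = w k ⬝ᵥ u l := fun k l =>
      lagrangian_pairing F₁ F₂ hsym hrank (u k) (w k) (u l) (w l) (hkey k) (hkey l)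
    exact poly_pairing_contradiction a ha hpair
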